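/- arXiv:2101.11419 — 2 statements merged into one kernel-verified Lean document; each statement's English description precedes it below -/
import Mathlib

section
/- If Y is an admissible monomial of degree 18 in P_5, then the weight vector ω(Y) is one of the following six sequences (followed by zeros): (2,2,1,1), (2,2,3), (2,4,2), (4,1,1,1), (4,1,3), (4,3,2). -/
open MvPolynomial

noncomputable section

/-- `P m` is the polynomial algebra `F₂[x₁, …, x_m]`. -/
abbrev P (m : ℕ) := MvPolynomial (Fin m) (ZMod 2)

/-- The total Steenrod square, the `F₂`-algebra endomorphism with `x_j ↦ x_j + x_j²`. -/
def Sq (m : ℕ) : P m →ₐ[ZMod 2] P m :=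
  MvPolynomial.aeval (fun j => X j + X j ^ 2)

/-- `f` is hit (in degree `n`): `f = ∑_{k ≥ 1} Sq^k(g_k)` with `g_k` homogeneous of
degree `n - k`; here `Sq^k(g_k)` is the degree-`n` homogeneous component of `Sq(g_k)`. -/
def IsHit (m n : ℕ) (f : P m) : Prop :=
  ∃ g : ℕ → P m, (∀ k, (g k).IsHomogeneous (n - k)) ∧
    f = ∑ k ∈ Finset.Icc 1 n, MvPolynomial.homogeneousComponent n (Sq m (g k))

/-- The subspace of hit polynomials of degree `n`. -/
def hitSubmodule (m n : ℕ) : Submodule (ZMod 2) (P m) :=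
  Submodule.span (ZMod 2) {f | f.IsHomogeneous n ∧ IsHit m n f}

/-- `Q^{⊗m}_n`: the quotient of the degree-`n` homogeneous component of `P m` by hit
polynomials. -/
abbrev QQ (m n : ℕ) :=
  (homogeneousSubmodule (Fin m) (ZMod 2) n) ⧸
    ((hitSubmodule m n).comap (homogeneousSubmodule (Fin m) (ZMod 2) n).subtype)

/-- The class in `Q^{⊗m}_n` of (the degree-`n` part of) a polynomial `f`. -/
def qClass (m n : ℕ) (f : P m) : QQ m n :=
  Submodule.Quotient.mk
    ⟨MvPolynomial.homogeneousComponent n f,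
      (mem_homogeneousSubmodule n _).mpr (homogeneousComponent_isHomogeneous n f)⟩

/-- The monomial `x₁^{u 1} ⋯ x_m^{u m}`. -/
def mono (m : ℕ) (u : Fin m → ℕ) : P m :=
  MvPolynomial.monomial (Finsupp.equivFunOnFinite.symm u) 1

/-- Total degree of the exponent vector `u`. -/
def degOf (m : ℕ) (u : Fin m → ℕ) : ℕ := ∑ j, u j

/-- The weight vector of the monomial with exponent vector `u`
(indexed from `0`):  `wt m u t = ∑_j α_t(u_j)`. -/
def wt (m : ℕ) (u : Fin m → ℕ) : ℕ → ℕ := fun t => ∑ j, (u j / 2 ^ t) % 2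

/-- Left-lexicographic strict order on weight vectors. -/
def lexLt (a b : ℕ → ℕ) : Prop := ∃ t, a t < b t ∧ ∀ s < t, a s = b s

/-- Left-lexicographic strict order on exponent vectors. -/
def lexLtFin {m : ℕ} (a b : Fin m → ℕ) : Prop := ∃ t, a t < b t ∧ ∀ s < t, a s = b s

/-- The order on monomials of the same degree: first by weight vectors, then by
exponent vectors, both left-lexicographically. -/
def monoLt (m : ℕ) (u v : Fin m → ℕ) : Prop :=
  lexLt (wt m u) (wt m v) ∨ (wt m u = wt m v ∧ lexLtFin u v)

/-- A monomial (of degree `n`) is inadmissible if it is congruent, modulo hit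
polynomials, to a sum of strictly smaller monomials of the same degree. -/
def Inadmissible (m n : ℕ) (u : Fin m → ℕ) : Prop :=
  ∃ S : Finset (Fin m → ℕ), (∀ v ∈ S, degOf m v = n ∧ monoLt m v u) ∧
    IsHit m n (mono m u - ∑ v ∈ S, mono m v)

/-- An admissible monomial of degree `n`. -/
def Admissible (m n : ℕ) (u : Fin m → ℕ) : Prop :=
  degOf m u = n ∧ ¬ Inadmissible m n u

/-- The weight vector given by a finite list (followed by zeros). -/
def wvec (l : List ℕ) : ℕ → ℕ := fun t => l.getD t 0

/-- The linear substitution action of a matrix `g` on `P m`: `x_i ↦ ∑_j g_{ij} x_j`. -/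
def act (m : ℕ) (g : Matrix (Fin m) (Fin m) (ZMod 2)) : P m →ₐ[ZMod 2] P m :=
  MvPolynomial.aeval (fun i => ∑ j, MvPolynomial.C (g i j) * X j)

/-- `P_m^{<ω}` in degree `n`: span of monomials of degree `n` with weight vector `< ω`. -/
def belowSubmodule (m n : ℕ) (w : ℕ → ℕ) : Submodule (ZMod 2) (P m) :=
  Submodule.span (ZMod 2)
    {f | ∃ u : Fin m → ℕ, degOf m u = n ∧ lexLt (wt m u) w ∧ f = mono m u}

/-- `P_m^{≤ω}` in degree `n`: span of monomials of degree `n` with weight vector `≤ ω`. -/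
def leSubmodule (m n : ℕ) (w : ℕ → ℕ) : Submodule (ZMod 2) (P m) :=
  Submodule.span (ZMod 2)
    {f | ∃ u : Fin m → ℕ, degOf m u = n ∧ (lexLt (wt m u) w ∨ wt m u = w) ∧ f = mono m u}

end


namespace HitProof
open Finset

lemma mono_eq_prod (v : Fin 5 → ℕ) : mono 5 v = ∏ j, (X j : P 5) ^ v j := by
  rw [mono, monomial_eq, Finsupp.prod_fintype]
  · simp
  · intro i; exact pow_zero _

lemma Sq_mono (v : Fin 5 → ℕ) :
    Sq 5 (mono 5 v) = ∏ j, ((X j : P 5) + X j ^ 2) ^ v j := by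
  rw [mono_eq_prod, map_prod]
  simp [Sq]

lemma XX_pow (j : Fin 5) (n : ℕ) :
    ((X j : P 5) + X j ^ 2) ^ n
      = ∑ k ∈ range (n + 1), ((n.choose k : ℕ) : P 5) * X j ^ (n + k) := by
  have h : (X j : P 5) + X j ^ 2 = X j * (X j + 1) := by ring
  rw [h, mul_pow, add_pow, Finset.mul_sum]
  apply Finset.sum_congr rfl
  intro k hk
  rw [pow_add]
  ring

lemma Sq_mono_expand (v : Fin 5 → ℕ) :
    Sq 5 (mono 5 v)
      = ∑ s ∈ Fintype.piFinset (fun j => range (v j + 1)),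
          (((∏ j, (v j).choose (s j)) : ℕ) : P 5) * mono 5 (v + s) := by
  rw [Sq_mono]
  simp only [XX_pow]
  rw [Finset.prod_univ_sum]
  apply Finset.sum_congr rfl
  intro s hs
  rw [Finset.prod_mul_distrib, mono_eq_prod]
  push_cast
  rfl

lemma degree_equiv (w : Fin 5 → ℕ) : (Finsupp.equivFunOnFinite.symm w).degree = degOf 5 w := by
  rw [Finsupp.degree_apply, degOf]
  rw [Finset.sum_subset (Finset.subset_univ _)]
  · simp
  · intro x _ hx
    simpa using hx

lemma hComp_mono (n : ℕ) (w : Fin 5 → ℕ) :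
    homogeneousComponent n (mono 5 w) = if n = degOf 5 w then mono 5 w else 0 := by
  apply homogeneousComponent_of_mem
  rw [mem_homogeneousSubmodule]
  exact isHomogeneous_monomial _ (degree_equiv w)

lemma natCast_P5 (c : ℕ) : ((c : P 5)) = if c % 2 = 1 then 1 else 0 := by
  conv_lhs => rw [← Nat.div_add_mod c 2]
  push_cast
  have h2 : ((2 : ℕ) : P 5) = 0 := by
    rw [show ((2:ℕ) : P 5) = C ((2:ℕ) : ZMod 2) from (map_natCast C 2).symm,
      show ((2:ℕ) : ZMod 2) = 0 by decide, map_zero]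
  push_cast at h2
  rw [h2, zero_mul, zero_add]
  rcases Nat.mod_two_eq_zero_or_one c with h | h <;> simp [h]

def Fset (g : Fin 5 → ℕ) (k : ℕ) : Finset (Fin 5 → ℕ) :=
  (Fintype.piFinset fun j => range (g j + 1)).filter
    fun s => degOf 5 s = k ∧ (∏ j, (g j).choose (s j)) % 2 = 1

lemma degOf_add (u v : Fin 5 → ℕ) : degOf 5 (u + v) = degOf 5 u + degOf 5 v := by
  simp [degOf, Finset.sum_add_distrib]

lemma master (g : Fin 5 → ℕ) (k : ℕ) :
    homogeneousComponent (degOf 5 g + k) (Sq 5 (mono 5 g))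
      = ∑ s ∈ Fset g k, mono 5 (g + s) := by
  rw [Sq_mono_expand, map_sum, Fset, Finset.sum_filter]
  apply Finset.sum_congr rfl
  intro s _
  rw [natCast_P5]
  by_cases h2 : (∏ j, (g j).choose (s j)) % 2 = 1 <;>
    by_cases h1 : degOf 5 s = k
  · simp [h1, h2, hComp_mono, degOf_add]
  · simp [h2, hComp_mono, degOf_add, Ne.symm h1, h1]
  · simp [h1, h2, hComp_mono, degOf_add]
  · simp [h2, hComp_mono, degOf_add, Ne.symm h1, h1]

lemma isHit_single (k : ℕ) (hk : k ∈ Finset.Icc 1 18) (g0 : P 5)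
    (hg : g0.IsHomogeneous (18 - k)) (f : P 5)
    (hf : f = homogeneousComponent 18 (Sq 5 g0)) : IsHit 5 18 f := by
  refine ⟨fun k' => if k' = k then g0 else 0, ?_, ?_⟩
  · intro k'
    by_cases h : k' = k
    · subst h; simpa using hg
    · simp only [h, if_false]; exact isHomogeneous_zero _ _ _
  · rw [Finset.sum_eq_single k]
    · simpa using hf
    · intro b _ hb; simp [hb]
    · intro h; exact absurd hk h

lemma inadmissible_of_cert (u g sX : Fin 5 → ℕ) (k : ℕ)
    (hk : k ∈ Finset.Icc 1 18)
    (hdg : degOf 5 g + k = 18)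
    (hmem : sX ∈ Fset g k)
    (hu : g + sX = u)
    (hsmall : ∀ s ∈ Fset g k, s ≠ sX → monoLt 5 (g + s) u) :
    Inadmissible 5 18 u := by
  refine ⟨((Fset g k).erase sX).image (fun s => g + s), ?_, ?_⟩
  · intro v hv
    rcases Finset.mem_image.mp hv with ⟨s, hs, rfl⟩
    have hs' := Finset.mem_of_mem_erase hs
    have hne := Finset.ne_of_mem_erase hs
    refine ⟨?_, hsmall s hs' hne⟩
    rcases Finset.mem_filter.mp hs' with ⟨_, hdeg, _⟩
    rw [degOf_add, hdeg]; exact hdg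
  · refine isHit_single k hk (mono 5 g) ?_ _ ?_
    · have h18 : (18 : ℕ) - k = degOf 5 g := by
        rcases Finset.mem_Icc.mp hk with ⟨h1, h2⟩; omega
      rw [h18, mono]
      exact isHomogeneous_monomial _ (degree_equiv g)
    · have hm : homogeneousComponent 18 (Sq 5 (mono 5 g)) = ∑ s ∈ Fset g k, mono 5 (g + s) := by
        rw [← hdg]; exact master g k
      rw [hm, Finset.sum_image (fun a _ b _ h => add_left_cancel h),
        ← Finset.add_sum_erase _ _ hmem, hu, CharTwo.sub_eq_add]

lemma D1 : ∀ a < 19, ∀ b < 19, b ≤ a → Nat.choose a b % 2 = 1 →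
    (a + b) % 2 + b % 2 = a % 2 := by decide

lemma D2 : ∀ a < 19, ∀ b < 19, b ≤ a → Nat.choose a b % 2 = 1 → b % 2 = 0 →
    (a + b) / 2 % 2 + b / 2 % 2 = a / 2 % 2 := by decide

lemma D3 : ∀ a < 19, a / 2 % 2 = 0 → Nat.choose a 2 % 2 = 1 → False := by decide

lemma D4 : ∀ n < 19, n % 2 + 2*(n/2 % 2) + 4*(n/4 % 2) + 8*(n/8 % 2) + 16*(n/16 % 2) = n := by
  decide

lemma D5 : ∀ a < 19, 4 ≤ a → a / 2 % 2 = 0 → Nat.choose (a - 2) 2 % 2 = 1 := by decide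

lemma D6 : ∀ a < 19, 8 ≤ a → a ≤ 11 → Nat.choose (a - 4) 4 % 2 = 1 := by decide

lemma mem_Fset {g s : Fin 5 → ℕ} {k : ℕ} (h : s ∈ Fset g k) :
    (∀ j, s j ≤ g j) ∧ degOf 5 s = k ∧ ∀ j, (g j).choose (s j) % 2 = 1 := by
  rcases Finset.mem_filter.mp h with ⟨hpi, hdeg, hodd⟩
  refine ⟨fun j => ?_, hdeg, fun j => ?_⟩
  · have := Fintype.mem_piFinset.mp hpi j
    simpa [Nat.lt_succ_iff] using this
  · by_contra hc
    have h2 : 2 ∣ (g j).choose (s j) := by omega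
    have h3 : (g j).choose (s j) ∣ ∏ j, (g j).choose (s j) :=
      Finset.dvd_prod_of_mem _ (Finset.mem_univ j)
    have := h2.trans h3
    omega

lemma mem_Fset_intro {g : Fin 5 → ℕ} {k : ℕ} (i : Fin 5) (c : ℕ) (hc : c ≤ g i) (hk : c = k)
    (hodd : (g i).choose c % 2 = 1) :
    (fun j => if j = i then c else 0) ∈ Fset g k := by
  rw [Fset, Finset.mem_filter]
  refine ⟨?_, ?_, ?_⟩
  · rw [Fintype.mem_piFinset]
    intro j
    by_cases h : j = i <;> simp [h, Nat.lt_succ_iff, hc]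
  · rw [degOf]
    simp [hk]
  · rw [Finset.prod_eq_single i (fun b _ hb => by simp [hb]) (fun h => absurd (Finset.mem_univ i) h)]
    simpa using hodd

lemma sum_update (u : Fin 5 → ℕ) (i : Fin 5) (v : ℕ) :
    degOf 5 (Function.update u i v) = degOf 5 u - u i + v := by
  have h1 := Finset.add_sum_erase Finset.univ u (Finset.mem_univ i)
  have h2 := Finset.add_sum_erase Finset.univ (Function.update u i v) (Finset.mem_univ i)
  have h3 : ∑ j ∈ Finset.univ.erase i, Function.update u i v j
      = ∑ j ∈ Finset.univ.erase i, u j :=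
    Finset.sum_congr rfl fun j hj => Function.update_of_ne (Finset.ne_of_mem_erase hj) _ _
  rw [degOf, degOf, ← h2, h3, Function.update_self, ← h1]
  omega

lemma coord_le {u : Fin 5 → ℕ} (h : degOf 5 u = 18) : ∀ j, u j ≤ 18 := fun j =>
  h ▸ Finset.single_le_sum (f := u) (fun _ _ => Nat.zero_le _) (Finset.mem_univ j)

lemma shape_one (f : Fin 5 → ℕ) (h : (∑ j, f j) = 1) :
    ∃ i, f i = 1 ∧ ∀ j, j ≠ i → f j = 0 := by
  obtain ⟨i, hi⟩ : ∃ i, f i ≠ 0 := by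
    by_contra hc; push_neg at hc
    simp [hc] at h
  have hsplit := Finset.add_sum_erase Finset.univ f (Finset.mem_univ i)
  have hrest : ∑ j ∈ Finset.univ.erase i, f j = 0 := by omega
  refine ⟨i, by omega, fun j hj => ?_⟩
  exact (Finset.sum_eq_zero_iff).mp hrest j (Finset.mem_erase.mpr ⟨hj, Finset.mem_univ j⟩)

lemma shape_single (f : Fin 5 → ℕ) (i : Fin 5) (c : ℕ) (hi : f i = c) (h : (∑ j, f j) = c) :
    ∀ j, j ≠ i → f j = 0 := by
  have hsplit := Finset.add_sum_erase Finset.univ f (Finset.mem_univ i)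
  have hrest : ∑ j ∈ Finset.univ.erase i, f j = 0 := by omega
  exact fun j hj => (Finset.sum_eq_zero_iff).mp hrest j (Finset.mem_erase.mpr ⟨hj, Finset.mem_univ j⟩)

lemma sum_two_special (f : Fin 5 → ℕ) (i j : Fin 5) (hij : i ≠ j) :
    ∑ t, f t = f i + f j + ∑ t ∈ (Finset.univ.erase i).erase j, f t := by
  rw [← Finset.add_sum_erase _ _ (Finset.mem_univ i),
    ← Finset.add_sum_erase _ f (Finset.mem_erase.mpr ⟨Ne.symm hij, Finset.mem_univ j⟩),
    Finset.erase_right_comm]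
  omega

lemma wt_two_special (x : Fin 5 → ℕ) (t : ℕ) (i j : Fin 5) (hij : i ≠ j) :
    wt 5 x t = x i / 2 ^ t % 2 + x j / 2 ^ t % 2
      + ∑ a ∈ (Finset.univ.erase i).erase j, x a / 2 ^ t % 2 :=
  sum_two_special (fun a => x a / 2 ^ t % 2) i j hij

lemma update_add_single (u : Fin 5 → ℕ) (i : Fin 5) (c : ℕ) (hc : c ≤ u i) :
    Function.update u i (u i - c) + (fun j => if j = i then c else 0) = u := by
  funext j
  by_cases h : j = i
  · subst h; simp [Function.update_self]; omega
  · simp [Function.update_of_ne h, h]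

lemma wt_eq_sum (x : Fin 5 → ℕ) (t : ℕ) : wt 5 x t = ∑ j, x j / 2 ^ t % 2 := rfl

lemma wt_update_congr (u : Fin 5 → ℕ) (i : Fin 5) (v t : ℕ) (h : v / 2 ^ t % 2 = u i / 2 ^ t % 2) :
    wt 5 (Function.update u i v) t = wt 5 u t := by
  rw [wt_eq_sum, wt_eq_sum]
  refine Finset.sum_congr rfl fun j _ => ?_
  rcases eq_or_ne j i with rfl | hj
  · rw [Function.update_self]; exact h
  · rw [Function.update_of_ne hj]

lemma wt_le_deg (s : Fin 5 → ℕ) (t : ℕ) : wt 5 s t ≤ degOf 5 s := by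
  rw [wt_eq_sum, degOf]
  exact Finset.sum_le_sum fun j _ => le_trans (Nat.mod_le _ _) (Nat.div_le_self _ _)

lemma wt_zero_parity (s : Fin 5 → ℕ) : wt 5 s 0 % 2 = degOf 5 s % 2 := by
  rw [wt_eq_sum, degOf, Finset.sum_nat_mod Finset.univ 2 s]
  congr 1
  exact Finset.sum_congr rfl fun j _ => by norm_num

lemma wt_sum_key {g s : Fin 5 → ℕ} (hg : ∀ j, g j ≤ 18) (hle : ∀ j, s j ≤ g j)
    (hodd : ∀ j, (g j).choose (s j) % 2 = 1) :
    wt 5 (g + s) 0 + wt 5 s 0 = wt 5 g 0 := by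
  rw [wt_eq_sum, wt_eq_sum, wt_eq_sum, ← Finset.sum_add_distrib]
  refine Finset.sum_congr rfl fun j _ => ?_
  have := D1 (g j) (by have := hg j; omega) (s j) (by have := hg j; have := hle j; omega)
    (hle j) (hodd j)
  simp only [Pi.add_apply, pow_zero, Nat.div_one]
  omega

lemma wt_sum_key1 {g s : Fin 5 → ℕ} (hg : ∀ j, g j ≤ 18) (hle : ∀ j, s j ≤ g j)
    (hodd : ∀ j, (g j).choose (s j) % 2 = 1) (heven : ∀ j, s j % 2 = 0) :
    wt 5 (g + s) 1 + wt 5 s 1 = wt 5 g 1 := by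
  rw [wt_eq_sum, wt_eq_sum, wt_eq_sum, ← Finset.sum_add_distrib]
  refine Finset.sum_congr rfl fun j _ => ?_
  have := D2 (g j) (by have := hg j; omega) (s j) (by have := hg j; have := hle j; omega)
    (hle j) (hodd j) (heven j)
  simp only [Pi.add_apply, pow_one]
  omega

lemma lexLt_t0 {a b : ℕ → ℕ} (hlt : a 0 < b 0) : lexLt a b :=
  ⟨0, hlt, fun s hs => absurd hs (Nat.not_lt_zero s)⟩

lemma lexLt_t1 {a b : ℕ → ℕ} (h0 : a 0 = b 0) (hlt : a 1 < b 1) : lexLt a b :=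
  ⟨1, hlt, fun s hs => by interval_cases s; exact h0⟩

lemma eq_single_fun {s : Fin 5 → ℕ} {i : Fin 5} {c : ℕ} (hi : s i = c)
    (h0 : ∀ j, j ≠ i → s j = 0) :
    s = fun j => if j = i then c else 0 := by
  funext j
  by_cases hj : j = i
  · subst hj; simp [hi]
  · simp [hj, h0 j hj]

lemma famA (u : Fin 5 → ℕ) (hdeg : degOf 5 u = 18) (h0 : wt 5 u 0 = 0) :
    Inadmissible 5 18 u := by
  have heven : ∀ j, u j % 2 = 0 := by
    intro j
    have := (Finset.sum_eq_zero_iff).mp h0 j (Finset.mem_univ j)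
    simpa using this
  obtain ⟨j0, hj0⟩ : ∃ j0, u j0 ≠ 0 := by
    by_contra hc; push_neg at hc
    rw [degOf] at hdeg; simp [hc] at hdeg
  have hu2 : 2 ≤ u j0 := by have := heven j0; omega
  set g := Function.update u j0 (u j0 - 1) with hg
  have hgj : ∀ j, j ≠ j0 → g j = u j := fun j hj => Function.update_of_ne hj _ _
  have hgj0 : g j0 = u j0 - 1 := Function.update_self _ _ _
  have hdg : degOf 5 g + 1 = 18 := by
    rw [hg, sum_update]; have := coord_le hdeg j0; omega
  have hmem : (fun j => if j = j0 then 1 else 0) ∈ Fset g 1 :=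
    mem_Fset_intro j0 1 (by rw [hgj0]; omega) rfl
      (by rw [hgj0, Nat.choose_one_right]; have := heven j0; omega)
  apply inadmissible_of_cert u g _ 1 (by decide) hdg hmem
    (update_add_single u j0 1 (by omega))
  intro s hs hne
  exfalso
  obtain ⟨hle, hdegs, hodd⟩ := mem_Fset hs
  obtain ⟨i, hi1, hi0⟩ := shape_one s hdegs
  have hoi : (g i).choose (s i) % 2 = 1 := hodd i
  rw [hi1, Nat.choose_one_right] at hoi
  by_cases h : i = j0
  · subst h
    exact hne (eq_single_fun hi1 hi0)
  · rw [hgj i h] at hoi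
    have := heven i
    omega

lemma famE (u : Fin 5 → ℕ) (hdeg : degOf 5 u = 18) (j0 : Fin 5)
    (hj0 : u j0 % 4 = 2) (hrest : ∀ i, i ≠ j0 → u i % 4 = 3) :
    Inadmissible 5 18 u := by
  set g := Function.update u j0 (u j0 - 1) with hg
  have hgj : ∀ j, j ≠ j0 → g j = u j := fun j hj => Function.update_of_ne hj _ _
  have hgj0 : g j0 = u j0 - 1 := Function.update_self _ _ _
  have hdg : degOf 5 g + 1 = 18 := by
    rw [hg, sum_update]; have := coord_le hdeg j0; omega
  have hmem : (fun j => if j = j0 then 1 else 0) ∈ Fset g 1 :=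
    mem_Fset_intro j0 1 (by rw [hgj0]; omega) rfl
      (by rw [hgj0, Nat.choose_one_right]; omega)
  apply inadmissible_of_cert u g _ 1 (by decide) hdg hmem
    (update_add_single u j0 1 (by omega))
  intro s hs hne
  obtain ⟨hle, hdegs, hodd⟩ := mem_Fset hs
  obtain ⟨i, hi1, hi0⟩ := shape_one s hdegs
  have hine : i ≠ j0 := by
    intro h
    subst h
    exact hne (eq_single_fun hi1 hi0)
  have hui := hrest i hine
  have hMi : (g + s) i = u i + 1 := by simp [Pi.add_apply, hgj i hine, hi1]
  have hMj0 : (g + s) j0 = u j0 - 1 := by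
    simp [Pi.add_apply, hgj0, hi0 j0 (Ne.symm hine)]
  have hMrest : ∀ j, j ≠ i → j ≠ j0 → (g + s) j = u j := fun j h1 h2 => by
    simp [Pi.add_apply, hgj j h2, hi0 j h1]
  have key : ∀ t : ℕ, wt 5 (g + s) t + (u i / 2 ^ t % 2) + (u j0 / 2 ^ t % 2)
      = wt 5 u t + ((g + s) i / 2 ^ t % 2) + ((g + s) j0 / 2 ^ t % 2) := by
    intro t
    have h1 := wt_two_special (g + s) t i j0 hine
    have h2 := wt_two_special u t i j0 hine
    have h3 : ∑ x ∈ (Finset.univ.erase i).erase j0, (g + s) x / 2 ^ t % 2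
        = ∑ x ∈ (Finset.univ.erase i).erase j0, u x / 2 ^ t % 2 :=
      Finset.sum_congr rfl fun x hx => by
        rw [hMrest x (Finset.ne_of_mem_erase (Finset.mem_of_mem_erase hx))
          (Finset.ne_of_mem_erase hx)]
    rw [h1, h2, h3]
    omega
  left
  apply lexLt_t1
  · have := key 0
    rw [hMi, hMj0] at this
    have e1 : (u i + 1) % 2 = 0 := by omega
    have e2 : (u j0 - 1) % 2 = 1 := by omega
    simp only [pow_zero, Nat.div_one] at this
    omega
  · have := key 1
    rw [hMi, hMj0] at this
    have e1 : (u i + 1) / 2 % 2 = 0 := by omega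
    have e2 : (u j0 - 1) / 2 % 2 = 0 := by omega
    have e3 : u i / 2 % 2 = 1 := by omega
    have e4 : u j0 / 2 % 2 = 1 := by omega
    simp only [pow_one] at this
    omega

lemma famB (u : Fin 5 → ℕ) (hdeg : degOf 5 u = 18) (h0 : wt 5 u 0 = 2) (h1 : wt 5 u 1 = 0) :
    Inadmissible 5 18 u := by
  have hb := coord_le hdeg
  have hbit1 : ∀ j, u j / 2 % 2 = 0 := by
    intro j
    have := (Finset.sum_eq_zero_iff).mp h1 j (Finset.mem_univ j)
    simpa using this
  obtain ⟨m, hm4⟩ : ∃ m, 4 ≤ u m := by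
    by_contra hc; push_neg at hc
    have hle1 : ∀ j, u j ≤ 1 := fun j => by have := hbit1 j; have := hc j; omega
    have : degOf 5 u ≤ 5 := by
      rw [degOf]
      calc ∑ j, u j ≤ ∑ _j : Fin 5, 1 := Finset.sum_le_sum fun j _ => hle1 j
        _ = 5 := by simp
    omega
  set g := Function.update u m (u m - 2) with hg
  have hgj : ∀ j, j ≠ m → g j = u j := fun j hj => Function.update_of_ne hj _ _
  have hgm : g m = u m - 2 := Function.update_self _ _ _
  have hgle : ∀ j, g j ≤ 18 := fun j => by
    rcases eq_or_ne j m with rfl | h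
    · rw [hgm]; have := hb j; omega
    · rw [hgj j h]; exact hb j
  have hdg : degOf 5 g + 2 = 18 := by rw [hg, sum_update]; have := hb m; omega
  have hmem : (fun j => if j = m then 2 else 0) ∈ Fset g 2 :=
    mem_Fset_intro m 2 (by rw [hgm]; omega) rfl
      (by rw [hgm]; exact D5 (u m) (by have := hb m; omega) hm4 (hbit1 m))
  apply inadmissible_of_cert u g _ 2 (by decide) hdg hmem
    (update_add_single u m 2 (by omega))
  intro s hs hne
  obtain ⟨hle, hdegs, hodd⟩ := mem_Fset hs
  have hsum0 : wt 5 (g + s) 0 + wt 5 s 0 = wt 5 g 0 := wt_sum_key hgle hle hodd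
  have hg0 : wt 5 g 0 = wt 5 u 0 := by
    rw [hg]; exact wt_update_congr u m _ 0 (by simp; omega)
  have hpar : wt 5 s 0 % 2 = 0 := by rw [wt_zero_parity, hdegs]
  have hwle : wt 5 s 0 ≤ 2 := hdegs ▸ wt_le_deg s 0
  rcases (by omega : wt 5 s 0 = 0 ∨ wt 5 s 0 = 2) with hc0 | hc0
  · -- all coordinates even: contradiction
    exfalso
    have heven : ∀ j, s j % 2 = 0 := by
      intro j
      have := (Finset.sum_eq_zero_iff).mp (by rw [← wt_eq_sum]; exact hc0) j (Finset.mem_univ j)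
      simpa using this
    obtain ⟨j1, hj1⟩ : ∃ j1, s j1 ≠ 0 := by
      by_contra hcc; push_neg at hcc
      rw [degOf] at hdegs; simp [hcc] at hdegs
    have hsle : s j1 ≤ 2 := by
      have : s j1 ≤ degOf 5 s :=
        Finset.single_le_sum (f := s) (fun _ _ => Nat.zero_le _) (Finset.mem_univ j1)
      omega
    have hs2 : s j1 = 2 := by have := heven j1; omega
    have hzero := shape_single s j1 2 hs2 (by rw [degOf] at hdegs; omega)
    rcases eq_or_ne j1 m with rfl | hj1m
    · exact hne (eq_single_fun hs2 hzero)
    · have hoj := hodd j1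
      rw [hgj j1 hj1m, hs2] at hoj
      exact D3 (u j1) (by have := hb j1; omega) (hbit1 j1) hoj
  · left
    apply lexLt_t0
    omega

lemma famCD (u : Fin 5 → ℕ) (hdeg : degOf 5 u = 18) (h2 : wt 5 u 2 = 0) (h3 : wt 5 u 3 = 1) :
    Inadmissible 5 18 u := by
  have hb := coord_le hdeg
  have hbit2 : ∀ j, u j / 4 % 2 = 0 := by
    intro j
    have := (Finset.sum_eq_zero_iff).mp h2 j (Finset.mem_univ j)
    simpa using this
  obtain ⟨d, hd1, hd0⟩ := shape_one (fun j => u j / 2 ^ 3 % 2) h3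
  have hud : 8 ≤ u d ∧ u d ≤ 11 := by have := hbit2 d; have := hb d; norm_num at hd1; omega
  have husm : ∀ j, j ≠ d → u j ≤ 3 := by
    intro j hj
    have hpair : u j + u d ≤ 18 := by
      have := sum_two_special u j d hj
      rw [degOf] at hdeg; omega
    have := hbit2 j
    have h8 := hd0 j hj
    norm_num at h8
    omega
  set g := Function.update u d (u d - 4) with hg
  have hgj : ∀ j, j ≠ d → g j = u j := fun j hj => Function.update_of_ne hj _ _
  have hgd : g d = u d - 4 := Function.update_self _ _ _
  have hgle : ∀ j, g j ≤ 18 := fun j => by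
    rcases eq_or_ne j d with rfl | h
    · rw [hgd]; have := hb j; omega
    · rw [hgj j h]; exact hb j
  have hdg : degOf 5 g + 4 = 18 := by rw [hg, sum_update]; omega
  have hmem : (fun j => if j = d then 4 else 0) ∈ Fset g 4 :=
    mem_Fset_intro d 4 (by rw [hgd]; omega) rfl
      (by rw [hgd]; exact D6 (u d) (by omega) hud.1 hud.2)
  apply inadmissible_of_cert u g _ 4 (by decide) hdg hmem
    (update_add_single u d 4 (by omega))
  intro s hs hne
  obtain ⟨hle, hdegs, hodd⟩ := mem_Fset hs
  have hsum0 : wt 5 (g + s) 0 + wt 5 s 0 = wt 5 g 0 := wt_sum_key hgle hle hodd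
  have hg0 : wt 5 g 0 = wt 5 u 0 := by
    rw [hg]; exact wt_update_congr u d _ 0 (by simp; omega)
  have hpar : wt 5 s 0 % 2 = 0 := by rw [wt_zero_parity, hdegs]
  rcases Nat.eq_zero_or_pos (wt 5 s 0) with hc0 | hc0
  · -- all coordinates even
    have heven : ∀ j, s j % 2 = 0 := by
      intro j
      have := (Finset.sum_eq_zero_iff).mp (by rw [← wt_eq_sum]; exact hc0) j (Finset.mem_univ j)
      simpa using this
    have hsd4 : s d ≠ 4 := by
      intro hsd
      have hzero := shape_single s d 4 hsd (by rw [degOf] at hdegs; omega)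
      exact hne (eq_single_fun hsd hzero)
    have hs02 : ∀ j, s j = 0 ∨ s j = 2 := by
      intro j
      have hsj : s j ≤ degOf 5 s :=
        Finset.single_le_sum (f := s) (fun _ _ => Nat.zero_le _) (Finset.mem_univ j)
      rcases eq_or_ne j d with rfl | hj
      · have := heven j; omega
      · have := hle j; rw [hgj j hj] at this
        have := husm j hj; have := heven j; omega
    have hsum1 : wt 5 (g + s) 1 + wt 5 s 1 = wt 5 g 1 := wt_sum_key1 hgle hle hodd heven
    have hwts1 : wt 5 s 1 = 2 := by
      have hrw : wt 5 s 1 = ∑ j, s j / 2 := by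
        rw [wt_eq_sum]
        exact Finset.sum_congr rfl fun j _ => by rcases hs02 j with h | h <;> simp [h]
      have hsum2 : ∑ j, s j = ∑ j, 2 * (s j / 2) :=
        Finset.sum_congr rfl fun j _ => by rcases hs02 j with h | h <;> simp [h]
      rw [← Finset.mul_sum] at hsum2
      rw [degOf] at hdegs
      omega
    have hg1 : wt 5 g 1 = wt 5 u 1 := by
      rw [hg]; exact wt_update_congr u d _ 1 (by simp; omega)
    left
    apply lexLt_t1
    · omega
    · omega
  · left
    apply lexLt_t0
    omega

set_option synthInstance.maxHeartbeats 400000 in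
set_option synthInstance.maxSize 2000 in
set_option maxHeartbeats 1000000 in
lemma classifyF : ∀ a b c d e : Fin 6, (a:ℕ) + 2*(b:ℕ) + 4*(c:ℕ) + 8*(d:ℕ) + 16*(e:ℕ) = 18 →
    ((a:ℕ)=2∧(b:ℕ)=2∧(c:ℕ)=1∧(d:ℕ)=1∧(e:ℕ)=0) ∨ ((a:ℕ)=2∧(b:ℕ)=2∧(c:ℕ)=3∧(d:ℕ)=0∧(e:ℕ)=0) ∨
    ((a:ℕ)=2∧(b:ℕ)=4∧(c:ℕ)=2∧(d:ℕ)=0∧(e:ℕ)=0) ∨ ((a:ℕ)=4∧(b:ℕ)=1∧(c:ℕ)=1∧(d:ℕ)=1∧(e:ℕ)=0) ∨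
    ((a:ℕ)=4∧(b:ℕ)=1∧(c:ℕ)=3∧(d:ℕ)=0∧(e:ℕ)=0) ∨ ((a:ℕ)=4∧(b:ℕ)=3∧(c:ℕ)=2∧(d:ℕ)=0∧(e:ℕ)=0) ∨
    (a:ℕ) = 0 ∨ ((a:ℕ)=2 ∧ (b:ℕ)=0) ∨ ((c:ℕ)=0 ∧ (d:ℕ)=1) ∨ ((a:ℕ)=4∧(b:ℕ)=5∧(c:ℕ)=1) := by
  decide

lemma classify : ∀ w0 < 6, ∀ w1 < 6, ∀ w2 < 6, ∀ w3 < 6, ∀ w4 < 6,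
    w0 + 2*w1 + 4*w2 + 8*w3 + 16*w4 = 18 →
    (w0=2∧w1=2∧w2=1∧w3=1∧w4=0) ∨ (w0=2∧w1=2∧w2=3∧w3=0∧w4=0) ∨ (w0=2∧w1=4∧w2=2∧w3=0∧w4=0) ∨
    (w0=4∧w1=1∧w2=1∧w3=1∧w4=0) ∨ (w0=4∧w1=1∧w2=3∧w3=0∧w4=0) ∨ (w0=4∧w1=3∧w2=2∧w3=0∧w4=0) ∨
    w0 = 0 ∨ (w0=2 ∧ w1=0) ∨ (w2=0 ∧ w3=1) ∨ (w0=4∧w1=5∧w2=1) :=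
  fun w0 h0 w1 h1 w2 h2 w3 h3 w4 h4 =>
    classifyF ⟨w0, h0⟩ ⟨w1, h1⟩ ⟨w2, h2⟩ ⟨w3, h3⟩ ⟨w4, h4⟩

lemma wt_le5 (u : Fin 5 → ℕ) (t : ℕ) : wt 5 u t ≤ 5 := by
  rw [wt_eq_sum]
  calc ∑ j, u j / 2 ^ t % 2 ≤ ∑ _j : Fin 5, 1 := Finset.sum_le_sum fun j _ => by omega
    _ = 5 := by simp

lemma wt_high (u : Fin 5 → ℕ) (hb : ∀ j, u j ≤ 18) (t : ℕ) (ht : 5 ≤ t) : wt 5 u t = 0 := by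
  rw [wt_eq_sum]
  apply Finset.sum_eq_zero
  intro j _
  have h32 : (32:ℕ) ≤ 2 ^ t := by
    calc (32:ℕ) = 2 ^ 5 := by norm_num
      _ ≤ 2 ^ t := Nat.pow_le_pow_right (by norm_num) ht
  have := hb j
  rw [Nat.div_eq_of_lt (by omega)]
  rfl

lemma wt_total (u : Fin 5 → ℕ) (hdeg : degOf 5 u = 18) :
    wt 5 u 0 + 2 * wt 5 u 1 + 4 * wt 5 u 2 + 8 * wt 5 u 3 + 16 * wt 5 u 4 = 18 := by
  have hb := coord_le hdeg
  have key : ∑ j, (u j % 2) + 2 * ∑ j, (u j / 2 % 2) + 4 * ∑ j, (u j / 4 % 2)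
      + 8 * ∑ j, (u j / 8 % 2) + 16 * ∑ j, (u j / 16 % 2) = 18 := by
    simp only [Finset.mul_sum]
    rw [← Finset.sum_add_distrib, ← Finset.sum_add_distrib, ← Finset.sum_add_distrib,
      ← Finset.sum_add_distrib, ← hdeg, degOf]
    exact Finset.sum_congr rfl fun j _ => by
      have := D4 (u j) (by have := hb j; omega); omega
  have e0 : wt 5 u 0 = ∑ j, (u j % 2) :=
    Finset.sum_congr rfl fun j _ => by norm_num
  have e1 : wt 5 u 1 = ∑ j, (u j / 2 % 2) :=
    Finset.sum_congr rfl fun j _ => by norm_num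
  have e2 : wt 5 u 2 = ∑ j, (u j / 4 % 2) :=
    Finset.sum_congr rfl fun j _ => by norm_num
  have e3 : wt 5 u 3 = ∑ j, (u j / 8 % 2) :=
    Finset.sum_congr rfl fun j _ => by norm_num
  have e4 : wt 5 u 4 = ∑ j, (u j / 16 % 2) :=
    Finset.sum_congr rfl fun j _ => by norm_num
  rw [e0, e1, e2, e3, e4] at *
  exact key

lemma wt_one_special (x : Fin 5 → ℕ) (t : ℕ) (i : Fin 5) :
    wt 5 x t = x i / 2 ^ t % 2 + ∑ a ∈ Finset.univ.erase i, x a / 2 ^ t % 2 :=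
  (Finset.add_sum_erase _ (fun a => x a / 2 ^ t % 2) (Finset.mem_univ i)).symm

lemma sum_bits_le (S : Finset (Fin 5)) (x : Fin 5 → ℕ) (t : ℕ) :
    ∑ a ∈ S, x a / 2 ^ t % 2 ≤ S.card := by
  calc ∑ a ∈ S, x a / 2 ^ t % 2 ≤ ∑ _a ∈ S, 1 := Finset.sum_le_sum fun a _ => by omega
    _ = S.card := by simp

lemma famE_hyp (u : Fin 5 → ℕ) (h0 : wt 5 u 0 = 4) (h1 : wt 5 u 1 = 5) :
    ∃ j0, u j0 % 4 = 2 ∧ ∀ i, i ≠ j0 → u i % 4 = 3 := by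
  have hall1 : ∀ j, u j / 2 % 2 = 1 := by
    intro j
    have hsplit := wt_one_special u 1 j
    have hble := sum_bits_le (Finset.univ.erase j) u 1
    have hcard : (Finset.univ.erase j).card = 4 := by
      rw [Finset.card_erase_of_mem (Finset.mem_univ j)]; simp
    have hpow : u j / 2 ^ 1 % 2 = u j / 2 % 2 := by norm_num
    omega
  obtain ⟨j0, hj0⟩ : ∃ j0, u j0 % 2 = 0 := by
    by_contra hc
    push_neg at hc
    have hwt : wt 5 u 0 = 5 := by
      rw [wt_eq_sum, Finset.sum_congr rfl
        (fun j _ => show u j / 2 ^ 0 % 2 = 1 by have := hc j; simp; omega)]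
      simp
    omega
  refine ⟨j0, by have := hall1 j0; omega, fun i hi => ?_⟩
  by_contra hc
  have hdec := wt_two_special u 0 i j0 hi
  have hb3 := sum_bits_le ((Finset.univ.erase i).erase j0) u 0
  have hcard : ((Finset.univ.erase i).erase j0).card = 3 := by
    rw [Finset.card_erase_of_mem (Finset.mem_erase.mpr ⟨Ne.symm hi, Finset.mem_univ j0⟩),
      Finset.card_erase_of_mem (Finset.mem_univ i)]
    simp
  have e1 : u i / 2 ^ 0 % 2 = u i % 2 := by simp
  have e2 : u j0 / 2 ^ 0 % 2 = u j0 % 2 := by simp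
  have := hall1 i
  omega

lemma wt_eq_wvec (u : Fin 5 → ℕ) (hb : ∀ j, u j ≤ 18) (l : List ℕ) (hlen : l.length ≤ 5)
    (h : ∀ t, t < 5 → wt 5 u t = wvec l t) : wt 5 u = wvec l := by
  funext t
  by_cases ht : t < 5
  · exact h t ht
  · push_neg at ht
    rw [wt_high u hb t ht, wvec, List.getD_eq_default _ _ (le_trans hlen ht)]

end HitProof

/-- The weight vector of any admissible monomial of degree 18 in `P 5` is
one of `(2,2,1,1)`, `(2,2,3)`, `(2,4,2)`, `(4,1,1,1)`, `(4,1,3)`, `(4,3,2)`. -/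
theorem stmt_5 (u : Fin 5 → ℕ) (hadm : Admissible 5 18 u) :
    wt 5 u = wvec [2, 2, 1, 1] ∨ wt 5 u = wvec [2, 2, 3] ∨ wt 5 u = wvec [2, 4, 2] ∨
    wt 5 u = wvec [4, 1, 1, 1] ∨ wt 5 u = wvec [4, 1, 3] ∨ wt 5 u = wvec [4, 3, 2] := by
  obtain ⟨hdeg, hnin⟩ := hadm
  have hb := HitProof.coord_le hdeg
  have h5 := fun t => HitProof.wt_le5 u t
  have htot := HitProof.wt_total u hdeg
  rcases HitProof.classify (wt 5 u 0) (by have := h5 0; omega) (wt 5 u 1) (by have := h5 1; omega)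
      (wt 5 u 2) (by have := h5 2; omega) (wt 5 u 3) (by have := h5 3; omega)
      (wt 5 u 4) (by have := h5 4; omega) htot with
    hc | hc | hc | hc | hc | hc | hc | hc | hc | hc
  · exact Or.inl (HitProof.wt_eq_wvec u hb _ (by norm_num) fun t ht => by
      interval_cases t <;> simp [wvec, hc.1, hc.2.1, hc.2.2.1, hc.2.2.2.1, hc.2.2.2.2])
  · exact Or.inr (Or.inl (HitProof.wt_eq_wvec u hb _ (by norm_num) fun t ht => by
      interval_cases t <;> simp [wvec, hc.1, hc.2.1, hc.2.2.1, hc.2.2.2.1, hc.2.2.2.2]))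
  · exact Or.inr (Or.inr (Or.inl (HitProof.wt_eq_wvec u hb _ (by norm_num) fun t ht => by
      interval_cases t <;> simp [wvec, hc.1, hc.2.1, hc.2.2.1, hc.2.2.2.1, hc.2.2.2.2])))
  · exact Or.inr (Or.inr (Or.inr (Or.inl (HitProof.wt_eq_wvec u hb _ (by norm_num) fun t ht => by
      interval_cases t <;> simp [wvec, hc.1, hc.2.1, hc.2.2.1, hc.2.2.2.1, hc.2.2.2.2]))))
  · exact Or.inr (Or.inr (Or.inr (Or.inr (Or.inl (HitProof.wt_eq_wvec u hb _ (by norm_num)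
      fun t ht => by
      interval_cases t <;> simp [wvec, hc.1, hc.2.1, hc.2.2.1, hc.2.2.2.1, hc.2.2.2.2])))))
  · exact Or.inr (Or.inr (Or.inr (Or.inr (Or.inr (HitProof.wt_eq_wvec u hb _ (by norm_num)
      fun t ht => by
      interval_cases t <;> simp [wvec, hc.1, hc.2.1, hc.2.2.1, hc.2.2.2.1, hc.2.2.2.2])))))
  · exact absurd (HitProof.famA u hdeg hc) hnin
  · exact absurd (HitProof.famB u hdeg hc.1 hc.2) hnin
  · exact absurd (HitProof.famCD u hdeg hc.1 hc.2) hnin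
  · obtain ⟨j0, hj0, hrest⟩ := HitProof.famE_hyp u hc.1 hc.2.1
    exact absurd (HitProof.famE u hdeg j0 hj0 hrest) hnin
end

section
/- For every integer t ≥ 2, ξ(23·2^t − 5) = 5; that is, the number n_t = 5(2^t − 1) + 18·2^t = 23·2^t − 5 can be written as a sum of five (but not fewer) numbers of the form 2^d − 1 with d ≥ 1. -/
open MvPolynomial

lemma xi12_L1 (s c : ℕ) : 2^c ≠ 23 * 2^s - 1 := by
  intro h
  match s, c with
  | 0, 0 => norm_num at h
  | 0, 1 => norm_num at h
  | 0, c+2 =>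
    have h1 : 1 ≤ (2:ℕ)^c := Nat.one_le_two_pow
    rw [pow_succ, pow_succ] at h
    norm_num at h
    omega
  | s+1, 0 =>
    have h1 : 1 ≤ (2:ℕ)^s := Nat.one_le_two_pow
    rw [pow_succ] at h; omega
  | s+1, c+1 =>
    have h1 : 1 ≤ (2:ℕ)^s := Nat.one_le_two_pow
    have h2 : 1 ≤ (2:ℕ)^c := Nat.one_le_two_pow
    rw [pow_succ, pow_succ] at h; omega

lemma xi12_L2 (s b c : ℕ) : 2^b + 2^c ≠ 23 * 2^s - 1 := by
  intro h
  match s, b, c with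
  | 0, b, c =>
    norm_num at h
    have h1 : 1 ≤ (2:ℕ)^b := Nat.one_le_two_pow
    have h2 : 1 ≤ (2:ℕ)^c := Nat.one_le_two_pow
    have hb : b < 5 := by
      refine (Nat.pow_lt_pow_iff_right (a := 2) (by norm_num)).mp ?_
      calc (2:ℕ)^b ≤ 22 := by omega
        _ < 2^5 := by norm_num
    have hc : c < 5 := by
      refine (Nat.pow_lt_pow_iff_right (a := 2) (by norm_num)).mp ?_
      calc (2:ℕ)^c ≤ 22 := by omega
        _ < 2^5 := by norm_num
    interval_cases b <;> interval_cases c <;> norm_num at h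
  | s+1, 0, 0 =>
    have h1 : 1 ≤ (2:ℕ)^s := Nat.one_le_two_pow
    rw [pow_succ] at h; norm_num at h; omega
  | s+1, 0, c+1 =>
    have h1 : 1 ≤ (2:ℕ)^s := Nat.one_le_two_pow
    rw [pow_succ, pow_succ] at h; norm_num at h
    exact xi12_L1 s c (by omega)
  | s+1, b+1, 0 =>
    have h1 : 1 ≤ (2:ℕ)^s := Nat.one_le_two_pow
    rw [pow_succ, pow_succ] at h; norm_num at h
    exact xi12_L1 s b (by omega)
  | s+1, b+1, c+1 =>
    have h1 : 1 ≤ (2:ℕ)^s := Nat.one_le_two_pow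
    rw [pow_succ, pow_succ, pow_succ] at h; omega

lemma xi12_L3 (t a b c : ℕ) (ht : 2 ≤ t) (ha : 1 ≤ a) (hb : 1 ≤ b) (hc : 1 ≤ c) :
    2^a + 2^b + 2^c ≠ 23 * 2^t - 2 := by
  intro h
  obtain ⟨t', rfl⟩ := Nat.exists_eq_add_of_le ht
  have hT : 1 ≤ (2:ℕ)^t' := Nat.one_le_two_pow
  rw [pow_add] at h
  norm_num at h
  obtain ⟨a', rfl⟩ := Nat.exists_eq_add_of_le ha
  obtain ⟨b', rfl⟩ := Nat.exists_eq_add_of_le hb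
  obtain ⟨c', rfl⟩ := Nat.exists_eq_add_of_le hc
  rw [pow_add, pow_add, pow_add] at h
  norm_num at h
  rcases a' with _ | a'' <;> rcases b' with _ | b'' <;> rcases c' with _ | c'' <;>
    simp only [pow_succ, pow_zero, one_mul] at h <;>
    first
    | omega
    | exact xi12_L2 t' b'' c'' (by omega)
    | exact xi12_L2 t' a'' c'' (by omega)
    | exact xi12_L2 t' a'' b'' (by omega)


/-- For every `t ≥ 2`, `ξ(23·2^t − 5) = 5`: the number
`n_t = 5(2^t − 1) + 18·2^t = 23·2^t − 5` is a sum of five, but not fewer, numbers of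
the form `2^d − 1` with `d ≥ 1`. -/
theorem stmt_12 (t : ℕ) (ht : 2 ≤ t) :
    IsLeast {γ : ℕ | ∃ d : Fin γ → ℕ, (∀ i, 0 < d i) ∧
      23 * 2 ^ t - 5 = ∑ i, (2 ^ d i - 1)} 5 := by
  obtain ⟨t', rfl⟩ := Nat.exists_eq_add_of_le ht
  have hT : 1 ≤ (2:ℕ)^t' := Nat.one_le_two_pow
  constructor
  · refine ⟨![t'+6, t'+4, t'+3, t'+1, t'+1], ?_, ?_⟩
    · intro i; fin_cases i <;> simp
    · rw [Fin.sum_univ_five]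
      simp only [Matrix.cons_val_zero, Matrix.cons_val_one, Matrix.head_cons,
        Matrix.cons_val_two, Matrix.tail_cons, Matrix.cons_val_three,
        Matrix.cons_val_four]
      rw [pow_add, pow_add (2:ℕ) t' 6, pow_add (2:ℕ) t' 4, pow_add (2:ℕ) t' 3,
        pow_add (2:ℕ) t' 1]
      norm_num
      omega
  · rintro γ ⟨d, hpos, hsum⟩
    by_contra hlt
    push_neg at hlt
    have h5 : γ ≤ 4 := by omega
    have hT2 : 4 ≤ (2:ℕ)^(2+t') := by
      rw [pow_add]; norm_num; omega
    interval_cases γ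
    · simp at hsum; omega
    · rw [Fin.sum_univ_one] at hsum
      obtain ⟨e, he⟩ := Nat.exists_eq_add_of_le (hpos 0)
      rw [he] at hsum
      rcases e with _ | e'
      · simp only [pow_add, pow_one] at hsum; norm_num at hsum; omega
      · simp only [pow_add, pow_succ, pow_zero, one_mul] at hsum
        norm_num at hsum
        exact xi12_L1 t' e' (by omega)
    · rw [Fin.sum_univ_two] at hsum
      obtain ⟨e0, he0⟩ := Nat.exists_eq_add_of_le (hpos 0)
      obtain ⟨e1, he1⟩ := Nat.exists_eq_add_of_le (hpos 1)
      rw [he0, he1] at hsum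
      simp only [pow_add, pow_succ, pow_zero, one_mul] at hsum
      have p0 : 1 ≤ (2:ℕ)^e0 := Nat.one_le_two_pow
      have p1 : 1 ≤ (2:ℕ)^e1 := Nat.one_le_two_pow
      norm_num at hsum
      omega
    · rw [Fin.sum_univ_three] at hsum
      have p0 : 1 ≤ (2:ℕ)^(d 0) := Nat.one_le_two_pow
      have p1 : 1 ≤ (2:ℕ)^(d 1) := Nat.one_le_two_pow
      have p2 : 1 ≤ (2:ℕ)^(d 2) := Nat.one_le_two_pow
      exact xi12_L3 (2+t') (d 0) (d 1) (d 2) (by omega) (hpos 0) (hpos 1) (hpos 2)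
        (by omega)
    · rw [Fin.sum_univ_four] at hsum
      obtain ⟨e0, he0⟩ := Nat.exists_eq_add_of_le (hpos 0)
      obtain ⟨e1, he1⟩ := Nat.exists_eq_add_of_le (hpos 1)
      obtain ⟨e2, he2⟩ := Nat.exists_eq_add_of_le (hpos 2)
      obtain ⟨e3, he3⟩ := Nat.exists_eq_add_of_le (hpos 3)
      rw [he0, he1, he2, he3] at hsum
      simp only [pow_add, pow_succ, pow_zero, one_mul] at hsum
      have p0 : 1 ≤ (2:ℕ)^e0 := Nat.one_le_two_pow
      have p1 : 1 ≤ (2:ℕ)^e1 := Nat.one_le_two_pow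
      have p2 : 1 ≤ (2:ℕ)^e2 := Nat.one_le_two_pow
      have p3 : 1 ≤ (2:ℕ)^e3 := Nat.one_le_two_pow
      norm_num at hsum
      omega
end
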